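/- There is an absolute constant C such that for every real ν ≥ 0 and every r > 0 with r ≥ 2ν, one has |∫_{[0, π/4] ∪ [3π/4, π]} e^{i(r sin θ - ν θ)} dθ| ≤ C r^{-1}. -/

import Mathlib

open MeasureTheory Real

lemma osc_bound (ν r a b m : ℝ) (hab : a ≤ b) (hm : 0 < m) (hr : 0 ≤ r)
    (hm' : ∀ θ ∈ Set.Icc a b, m ≤ |r * Real.cos θ - ν|) :
    ‖∫ θ in a..b, Complex.exp (Complex.I * ((r * Real.sin θ - ν * θ : ℝ) : ℂ))‖
      ≤ 2 / m + (b - a) * (r / m ^ 2) := by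
  set u : ℝ → ℂ := fun θ => Complex.exp (Complex.I * ((r * Real.sin θ - ν * θ : ℝ) : ℂ)) with hu
  set p : ℝ → ℝ := fun θ => r * Real.cos θ - ν with hp
  set v : ℝ → ℂ := fun θ => (Complex.I * (p θ : ℂ))⁻¹ with hv
  have huIcc : Set.uIcc a b = Set.Icc a b := Set.uIcc_of_le hab
  have hne : ∀ θ ∈ Set.Icc a b, Complex.I * (p θ : ℂ) ≠ 0 := by
    intro θ hθ
    have := hm' θ hθ
    have hp0 : p θ ≠ 0 := by
      intro h; rw [hp] at h; simp only [h] at this; simp at this; linarith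
    simp [Complex.ext_iff, Complex.I_mul_re, Complex.I_mul_im, hp0]
  -- derivative of u
  have hud : ∀ θ, HasDerivAt u (Complex.I * (p θ : ℂ) * u θ) θ := by
    intro θ
    have h1 : HasDerivAt (fun θ : ℝ => r * Real.sin θ - ν * θ) (p θ) θ := by
      have := ((Real.hasDerivAt_sin θ).const_mul r).sub
        ((hasDerivAt_id θ).const_mul ν)
      exact this.congr_deriv (by simp [hp])
    have h2 : HasDerivAt (fun θ : ℝ => ((r * Real.sin θ - ν * θ : ℝ) : ℂ))
        ((p θ : ℝ) : ℂ) θ := h1.ofReal_comp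
    have h3 := (h2.const_mul Complex.I).cexp
    simpa [hu, mul_comm, mul_left_comm] using h3
  -- derivative of v
  have hvd : ∀ θ ∈ Set.Icc a b, HasDerivAt v
      (-(Complex.I * ((-(r * Real.sin θ) : ℝ) : ℂ)) / (Complex.I * (p θ : ℂ)) ^ 2) θ := by
    intro θ hθ
    have h1 : HasDerivAt p (-(r * Real.sin θ)) θ := by
      have := ((Real.hasDerivAt_cos θ).const_mul r).sub_const ν
      simpa [hp, mul_comm] using this
    have h2 : HasDerivAt (fun θ => Complex.I * ((p θ : ℝ) : ℂ))
        (Complex.I * ((-(r * Real.sin θ) : ℝ) : ℂ)) θ := h1.ofReal_comp.const_mul _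
    have h3 := (hasDerivAt_inv (hne θ hθ)).comp θ h2
    have h4 : -((Complex.I * ((p θ : ℝ) : ℂ)) ^ 2)⁻¹ * (Complex.I * ((-(r * Real.sin θ) : ℝ) : ℂ))
        = -(Complex.I * ((-(r * Real.sin θ) : ℝ) : ℂ)) / (Complex.I * ((p θ : ℝ) : ℂ)) ^ 2 := by
      field_simp
    rw [h4] at h3
    exact h3
  have hcontp : Continuous p := by
    continuity
  have hcontu : Continuous u := by
    have : Continuous fun θ : ℝ => r * Real.sin θ - ν * θ := by continuity
    exact Complex.continuous_exp.comp (continuous_const.mul (Complex.continuous_ofReal.comp this))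
  have hcontv : ContinuousOn v (Set.Icc a b) := by
    apply ContinuousOn.inv₀
    · exact (continuous_const.mul (Complex.continuous_ofReal.comp hcontp)).continuousOn
    · exact hne
  -- integration by parts : ∫ v * u' = v b * u b - v a * u a - ∫ v' * u
  have hibp := intervalIntegral.integral_mul_deriv_eq_deriv_mul
    (u := v) (v := u)
    (u' := fun θ => -(Complex.I * ((-(r * Real.sin θ) : ℝ) : ℂ)) / (Complex.I * (p θ : ℂ)) ^ 2)
    (v' := fun θ => Complex.I * (p θ : ℂ) * u θ)
    (fun θ hθ => hvd θ (huIcc ▸ hθ))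
    (fun θ hθ => hud θ)
    (by
      apply ContinuousOn.intervalIntegrable
      rw [huIcc]
      apply ContinuousOn.div
      · exact Continuous.continuousOn (by continuity)
      · exact ((continuous_const.mul (Complex.continuous_ofReal.comp hcontp)).pow 2).continuousOn
      · intro θ hθ; exact pow_ne_zero _ (hne θ hθ))
    (((continuous_const.mul (Complex.continuous_ofReal.comp hcontp)).mul
        hcontu).intervalIntegrable a b)
  have hkey : ∀ θ ∈ Set.uIcc a b, v θ * (Complex.I * (p θ : ℂ) * u θ) = u θ := by
    intro θ hθ
    rw [huIcc] at hθ
    rw [hv]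
    field_simp [hne θ hθ, (mul_ne_zero_iff.mp (hne θ hθ)).2]
  have heq : ∫ θ in a..b, u θ
      = v b * u b - v a * u a
        - ∫ θ in a..b, (-(Complex.I * ((-(r * Real.sin θ) : ℝ) : ℂ))
            / (Complex.I * (p θ : ℂ)) ^ 2) * u θ := by
    rw [← hibp]
    apply intervalIntegral.integral_congr
    intro θ hθ
    exact (hkey θ hθ).symm
  have habs : ∀ x : ℝ, ‖Complex.I * (x : ℂ)‖ = |x| := fun x => by
    rw [norm_mul, Complex.norm_I, one_mul, Complex.norm_real, Real.norm_eq_abs]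
  have hnormu : ∀ θ, ‖u θ‖ = 1 := by
    intro θ
    rw [hu]
    simp only [mul_comm Complex.I]
    exact Complex.norm_exp_ofReal_mul_I _
  have hnormv : ∀ θ ∈ Set.Icc a b, ‖v θ‖ ≤ 1 / m := by
    intro θ hθ
    rw [hv]
    rw [norm_inv]
    rw [habs]
    have h2 := hm' θ hθ
    rw [one_div]
    exact inv_anti₀ hm h2
  have hnormint : ∀ θ ∈ Set.uIcc a b,
      ‖(-(Complex.I * ((-(r * Real.sin θ) : ℝ) : ℂ)) / (Complex.I * (p θ : ℂ)) ^ 2) * u θ‖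
        ≤ r / m ^ 2 := by
    intro θ hθ
    rw [huIcc] at hθ
    rw [norm_mul, hnormu, mul_one, norm_div, norm_neg, norm_pow]
    rw [habs, habs, abs_neg]
    have hnum : |r * Real.sin θ| ≤ r := by
      rw [abs_mul, abs_of_nonneg hr]
      calc r * |Real.sin θ| ≤ r * 1 := by
            exact mul_le_mul_of_nonneg_left (abs_sin_le_one θ) hr
        _ = r := mul_one r
    have hden : m ^ 2 ≤ |p θ| ^ 2 := by
      apply pow_le_pow_left₀ hm.le (hm' θ hθ)
    exact div_le_div₀ hr hnum (by positivity) hden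
  calc ‖∫ θ in a..b, u θ‖
      ≤ ‖v b * u b‖ + ‖v a * u a‖
        + ‖∫ θ in a..b, (-(Complex.I * ((-(r * Real.sin θ) : ℝ) : ℂ))
            / (Complex.I * (p θ : ℂ)) ^ 2) * u θ‖ := by
        rw [heq]
        exact (norm_sub_le _ _).trans (by
          gcongr
          exact norm_sub_le _ _)
    _ ≤ 1 / m + 1 / m + (r / m ^ 2) * |b - a| := by
        gcongr
        · rw [norm_mul, hnormu, mul_one]
          exact hnormv b ⟨hab, le_refl b⟩
        · rw [norm_mul, hnormu, mul_one]
          exact hnormv a ⟨le_refl a, hab⟩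
        · exact intervalIntegral.norm_integral_le_of_norm_le_const
            (fun θ hθ => hnormint θ (Set.uIoc_subset_uIcc hθ))
    _ ≤ 2 / m + (b - a) * (r / m ^ 2) := by
        rw [abs_of_nonneg (by linarith)]
        apply le_of_eq
        ring

/-- Non-stationary phase bound: for `r ≥ 2ν`,
`|∫_{[0,π/4] ∪ [3π/4,π]} e^{i(r sin θ - νθ)} dθ| ≤ C r⁻¹`. -/
theorem nonstationary_phase_bound :
    ∃ C : ℝ, 0 < C ∧ ∀ ν r : ℝ, 0 ≤ ν → 0 < r → 2 * ν ≤ r →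
      ‖∫ θ in (Set.Icc (0 : ℝ) (π / 4) ∪ Set.Icc (3 * π / 4) π),
          Complex.exp (Complex.I * ((r * Real.sin θ - ν * θ : ℝ) : ℂ))‖
        ≤ C * r⁻¹ := by
  refine ⟨70, by norm_num, fun ν r hν hr hrν => ?_⟩
  have hπ := Real.pi_pos
  have hπ4 := Real.pi_le_four
  have hsqrt2 : (1.4 : ℝ) ≤ Real.sqrt 2 := by
    nlinarith [Real.sq_sqrt (by norm_num : (2:ℝ) ≥ 0), Real.sqrt_nonneg 2]
  set f : ℝ → ℂ := fun θ => Complex.exp (Complex.I * ((r * Real.sin θ - ν * θ : ℝ) : ℂ)) with hf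
  have hcontf : Continuous f := by
    have : Continuous fun θ : ℝ => r * Real.sin θ - ν * θ := by continuity
    exact Complex.continuous_exp.comp (continuous_const.mul (Complex.continuous_ofReal.comp this))
  have hdisj : Disjoint (Set.Icc (0:ℝ) (π/4)) (Set.Icc (3*π/4) π) := by
    apply Set.disjoint_left.2
    intro x hx1 hx2
    have := hx1.2
    have := hx2.1
    linarith
  have hI1 : IntegrableOn f (Set.Icc (0:ℝ) (π/4)) := hcontf.integrableOn_Icc
  have hI2 : IntegrableOn f (Set.Icc (3*π/4) π) := hcontf.integrableOn_Icc
  rw [setIntegral_union hdisj measurableSet_Icc hI1 hI2]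
  have hb1 : ‖∫ θ in Set.Icc (0:ℝ) (π/4), f θ‖ ≤ 35 * r⁻¹ := by
    have hab : (0:ℝ) ≤ π/4 := by linarith
    rw [MeasureTheory.integral_Icc_eq_integral_Ioc,
      ← intervalIntegral.integral_of_le hab]
    have hmain := osc_bound ν r 0 (π/4) (r/5) hab (by linarith) hr.le ?_
    · refine hmain.trans ?_
      have e1 : 2 / (r/5) + (π/4 - 0) * (r / (r/5)^2) = 10 / r + (π/4) * (25 / r) := by
        field_simp
        ring
      rw [e1]
      have : (π/4) * (25/r) ≤ 1 * (25/r) := by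
        apply mul_le_mul_of_nonneg_right (by linarith) (by positivity)
      calc 10 / r + (π/4) * (25/r) ≤ 10 / r + 1 * (25/r) := by linarith
        _ = 35 * r⁻¹ := by field_simp; ring
    · intro θ hθ
      have hcos : Real.cos (π/4) ≤ Real.cos θ :=
        Real.cos_le_cos_of_nonneg_of_le_pi hθ.1 (by linarith) hθ.2
      rw [Real.cos_pi_div_four] at hcos
      have : r / 5 ≤ r * Real.cos θ - ν := by
        have h1 : r * (Real.sqrt 2 / 2) ≤ r * Real.cos θ :=
          mul_le_mul_of_nonneg_left hcos hr.le
        nlinarith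
      exact this.trans (le_abs_self _)
  have hb2 : ‖∫ θ in Set.Icc (3*π/4) π, f θ‖ ≤ 35 * r⁻¹ := by
    have hab : 3*π/4 ≤ π := by linarith
    rw [MeasureTheory.integral_Icc_eq_integral_Ioc,
      ← intervalIntegral.integral_of_le hab]
    have hmain := osc_bound ν r (3*π/4) π (r/5) hab (by linarith) hr.le ?_
    · refine hmain.trans ?_
      have e1 : 2 / (r/5) + (π - 3*π/4) * (r / (r/5)^2) = 10 / r + (π/4) * (25 / r) := by
        field_simp
        ring
      rw [e1]
      have : (π/4) * (25/r) ≤ 1 * (25/r) := by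
        apply mul_le_mul_of_nonneg_right (by linarith) (by positivity)
      calc 10 / r + (π/4) * (25/r) ≤ 10 / r + 1 * (25/r) := by linarith
        _ = 35 * r⁻¹ := by field_simp; ring
    · intro θ hθ
      have hcos : Real.cos θ ≤ Real.cos (3*π/4) :=
        Real.cos_le_cos_of_nonneg_of_le_pi (by linarith) hθ.2 hθ.1
      have h34 : Real.cos (3*π/4) = -(Real.sqrt 2 / 2) := by
        have : (3:ℝ)*π/4 = π - π/4 := by ring
        rw [this, Real.cos_pi_sub, Real.cos_pi_div_four]
      rw [h34] at hcos
      have : r / 5 ≤ -(r * Real.cos θ - ν) := by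
        have h1 : r * Real.cos θ ≤ r * (-(Real.sqrt 2 / 2)) :=
          mul_le_mul_of_nonneg_left hcos hr.le
        nlinarith
      exact this.trans (neg_le_abs _)
  calc ‖(∫ θ in Set.Icc (0:ℝ) (π/4), f θ) + ∫ θ in Set.Icc (3*π/4) π, f θ‖
      ≤ ‖∫ θ in Set.Icc (0:ℝ) (π/4), f θ‖ + ‖∫ θ in Set.Icc (3*π/4) π, f θ‖ :=
        norm_add_le _ _
    _ ≤ 35 * r⁻¹ + 35 * r⁻¹ := add_le_add hb1 hb2
    _ = 70 * r⁻¹ := by ring
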